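/- Let q ≡ 1 (mod 3) be an odd prime power, q ≥ 13, and consider the graph on GF(q) × GF(q) with (i,a) adjacent to (j,b) iff (b−a)(j−i) = 1. Then for every vertex v, the subgraph induced on the neighborhood of v is 2-regular (a disjoint union of cycles). -/

import Mathlib

/-- The component of the contraction graph of `PGL(2,q)` corresponding to the
parameter `r`: vertices `(i,a)` stand for the maps `x ↦ a + r/(x-i)`, and
`(i,a)`, `(j,b)` are adjacent iff `(b-a)(j-i) = r`. -/
def pglGraph (K : Type*) [Field K] (r : K) : SimpleGraph (K × K) where
  Adj v w := v ≠ w ∧ (w.2 - v.2) * (w.1 - v.1) = r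
  symm := ⟨by
    intro v w h
    exact ⟨h.1.symm, by linear_combination h.2⟩⟩
  loopless := ⟨fun v h => h.1 rfl⟩

theorem stmt15 {K : Type*} [Field K] [Fintype K] (q : ℕ) (hq : Fintype.card K = q)
    (hodd : Odd q) (hq3 : q % 3 = 1) (hq13 : 13 ≤ q) :
    ∀ v w : K × K, w ∈ (pglGraph K 1).neighborSet v →
      ((pglGraph K 1).neighborSet v ∩ (pglGraph K 1).neighborSet w).ncard = 2 := by
  -- characteristic facts
  classical
  haveI : CharP K (ringChar K) := ringChar.charP K
  obtain ⟨n, hpp, hcard⟩ := FiniteField.card K (ringChar K)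
  rw [hq] at hcard
  have h2 : (2 : K) ≠ 0 := by
    have hp2 : ringChar K ≠ 2 := by
      rintro h
      rw [h] at hcard
      have : Even q := by rw [hcard]; exact (Nat.even_pow.mpr ⟨even_iff_two_dvd.mpr dvd_rfl, n.ne_zero⟩)
      exact (Nat.not_odd_iff_even.mpr this) hodd
    have := (CharP.cast_eq_zero_iff K (ringChar K) 2)
    intro h
    have : ringChar K ∣ 2 := this.mp (by exact_mod_cast h)
    exact hp2 ((Nat.prime_dvd_prime_iff_eq hpp Nat.prime_two).mp this)
  have h3 : (3 : K) ≠ 0 := by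
    have hp3 : ringChar K ≠ 3 := by
      rintro h
      rw [h] at hcard
      have : (3:ℕ) ∣ q := hcard ▸ dvd_pow_self 3 n.ne_zero
      omega
    have := (CharP.cast_eq_zero_iff K (ringChar K) 3)
    intro h
    have : ringChar K ∣ 3 := this.mp (by exact_mod_cast h)
    exact hp3 ((Nat.prime_dvd_prime_iff_eq hpp Nat.prime_three).mp this)
  -- square root of -3
  haveI : Fact (Nat.Prime 3) := ⟨Nat.prime_three⟩
  have h3dvd : 3 ∣ Fintype.card Kˣ := by
    rw [Fintype.card_units, hq]; omega
  obtain ⟨ω, hω⟩ := exists_prime_orderOf_dvd_card (G := Kˣ) 3 h3dvd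
  have hω3 : (ω : K) ^ 3 = 1 := by
    have h := congrArg (Units.val) (hω ▸ pow_orderOf_eq_one ω)
    push_cast at h
    exact h
  have hω1 : (ω : K) ≠ 1 := by
    intro h
    have : ω = 1 := Units.val_eq_one.mp h
    rw [this, orderOf_one] at hω
    omega
  have hsum : (ω : K) ^ 2 + ω + 1 = 0 := by
    have hne : (ω : K) - 1 ≠ 0 := sub_ne_zero.mpr hω1
    have hz : ((ω : K) - 1) * ((ω : K) ^ 2 + ω + 1) = 0 := by linear_combination hω3
    exact (mul_eq_zero.mp hz).resolve_left hne
  set s : K := 2 * ω + 1 with hs_def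
  have hs : s ^ 2 = -3 := by rw [hs_def]; linear_combination 4 * hsum
  have hs0 : s ≠ 0 := by
    intro h; apply h3; rw [h] at hs; linear_combination hs
  have hsne1 : s ≠ 1 := by
    intro h
    rw [h] at hs
    have h4 : (2 : K) * 2 = 0 := by linear_combination hs
    exact h2 (mul_self_eq_zero.mp h4)
  have hsnem1 : s ≠ -1 := by
    intro h
    rw [h] at hs
    have h4 : (2 : K) * 2 = 0 := by linear_combination hs
    exact h2 (mul_self_eq_zero.mp h4)
  -- main part
  rintro ⟨i, a⟩ ⟨j, b⟩ hvw
  rw [SimpleGraph.mem_neighborSet] at hvw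
  obtain ⟨hne, hprod⟩ := hvw
  simp only [pglGraph] at hprod
  set d : K := j - i with hd_def
  have hd : d ≠ 0 := by
    intro h
    rw [h, mul_zero] at hprod
    exact one_ne_zero hprod.symm
  set t : K := (2 : K)⁻¹ with ht_def
  have ht : (2 : K) * t = 1 := mul_inv_cancel₀ h2
  have ht0 : t ≠ 0 := inv_ne_zero h2
  set x₁ : K := d * (1 + s) * t with hx1_def
  set x₂ : K := d * (1 - s) * t with hx2_def
  have h1s : (1 : K) + s ≠ 0 := fun h => hsnem1 (by linear_combination h)
  have h1s' : (1 : K) - s ≠ 0 := fun h => hsne1 (by linear_combination -h)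
  have hx10 : x₁ ≠ 0 := mul_ne_zero (mul_ne_zero hd h1s) ht0
  have hx20 : x₂ ≠ 0 := mul_ne_zero (mul_ne_zero hd h1s') ht0
  have hx1d : x₁ ≠ d := by
    intro h
    apply hsne1
    have h' : d * (s - 1) = 0 := by linear_combination 2 * h - d * (1 + s) * ht
    have := (mul_eq_zero.mp h').resolve_left hd
    linear_combination this
  have hx2d : x₂ ≠ d := by
    intro h
    apply hsnem1
    have h' : d * (-1 - s) = 0 := by linear_combination 2 * h - d * (1 - s) * ht
    have := (mul_eq_zero.mp h').resolve_left hd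
    linear_combination -this
  have hx12 : x₁ ≠ x₂ := by
    intro h
    apply hs0
    have h' : (2 : K) * (d * s) = 0 := by
      linear_combination 2 * h - d * (1 + s) * ht + d * (1 - s) * ht
    have h'' := (mul_eq_zero.mp h').resolve_left h2
    exact (mul_eq_zero.mp h'').resolve_left hd
  have hsum12 : x₁ + x₂ = d := by linear_combination d * ht
  have hprod12 : x₁ * x₂ = d ^ 2 := by
    linear_combination (-(d ^ 2) * t ^ 2) * hs + (d ^ 2 * (2 * t + 1)) * ht
  have hfac : ∀ x : K, (x - x₁) * (x - x₂) = x ^ 2 - d * x + d ^ 2 := by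
    intro x
    linear_combination (-x) * hsum12 + hprod12
  have hq1 : x₁ ^ 2 - d * x₁ + d ^ 2 = 0 := by
    have h := hfac x₁; simp at h; linear_combination -h
  have hq2 : x₂ ^ 2 - d * x₂ + d ^ 2 = 0 := by
    have h := hfac x₂; simp at h; linear_combination -h
  have hset : (pglGraph K 1).neighborSet (i, a) ∩ (pglGraph K 1).neighborSet (j, b)
      = {(i + x₁, a + x₁⁻¹), (i + x₂, a + x₂⁻¹)} := by
    ext ⟨k, c⟩
    simp only [Set.mem_inter_iff, SimpleGraph.mem_neighborSet, pglGraph, Set.mem_insert_iff,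
      Set.mem_singleton_iff, Prod.mk.injEq, ne_eq, Prod.ext_iff]
    constructor
    · rintro ⟨⟨-, h1⟩, ⟨-, h2'⟩⟩
      have hx : k - i ≠ 0 := by
        intro h; rw [h] at h1; simp at h1
      have hq0 : (k - i) ^ 2 - d * (k - i) + d ^ 2 = 0 := by
        rw [hd_def]
        linear_combination ((j-i)*((k-i)-(j-i))) * h1 - ((j-i)*(k-i)) * h2'
          + ((j-i)*(k-i) - (k-i)^2) * hprod
      have hz : (k - i - x₁) * (k - i - x₂) = 0 := by rw [hfac]; exact hq0
      have hc : c - a = (k - i)⁻¹ := eq_inv_of_mul_eq_one_left h1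
      rcases mul_eq_zero.mp hz with h | h
      · left
        have hk : k = i + x₁ := by linear_combination h
        constructor
        · exact hk
        · have hki : k - i = x₁ := by linear_combination h
          rw [hki] at hc
          linear_combination hc
      · right
        have hk : k = i + x₂ := by linear_combination h
        constructor
        · exact hk
        · have hki : k - i = x₂ := by linear_combination h
          rw [hki] at hc
          linear_combination hc
    · rintro (⟨hk, hc⟩ | ⟨hk, hc⟩) <;> subst hk <;> subst hc
      · refine ⟨⟨?_, ?_⟩, ?_, ?_⟩
        · intro h
          exact hx10 (by linear_combination -h.1)
        · have heq : (a + x₁⁻¹ - a) * (i + x₁ - i) = x₁⁻¹ * x₁ := by ring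
          rw [heq]
          exact inv_mul_cancel₀ hx10
        · intro h
          have : x₁ = d := by rw [hd_def]; linear_combination -h.1
          exact hx1d this
        · have hxinv : x₁⁻¹ * x₁ = 1 := inv_mul_cancel₀ hx10
          have key : (a + x₁⁻¹ - b) * (x₁ - d) = 1 := by
            have h' : ((a + x₁⁻¹ - b) * (x₁ - d)) * x₁ = 1 * x₁ := by
              linear_combination (x₁ - d) * hxinv + (a - b) * hq1 + d * hprod
            exact mul_right_cancel₀ hx10 h'
          rw [show i + x₁ - j = x₁ - d by rw [hd_def]; ring]
          exact key
      · refine ⟨⟨?_, ?_⟩, ?_, ?_⟩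
        · intro h
          exact hx20 (by linear_combination -h.1)
        · have heq : (a + x₂⁻¹ - a) * (i + x₂ - i) = x₂⁻¹ * x₂ := by ring
          rw [heq]
          exact inv_mul_cancel₀ hx20
        · intro h
          have : x₂ = d := by rw [hd_def]; linear_combination -h.1
          exact hx2d this
        · have hxinv : x₂⁻¹ * x₂ = 1 := inv_mul_cancel₀ hx20
          have key : (a + x₂⁻¹ - b) * (x₂ - d) = 1 := by
            have h' : ((a + x₂⁻¹ - b) * (x₂ - d)) * x₂ = 1 * x₂ := by
              linear_combination (x₂ - d) * hxinv + (a - b) * hq2 + d * hprod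
            exact mul_right_cancel₀ hx20 h'
          rw [show i + x₂ - j = x₂ - d by rw [hd_def]; ring]
          exact key
  rw [hset]
  refine Set.ncard_pair ?_
  intro h
  exact hx12 (by linear_combination congrArg Prod.fst h)
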